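/- Let {(η¹_x, ρ¹_x)}_{x∈[ℓ₁]} and {(η²_y, ρ²_y)}_{y∈[ℓ₂]} be two ensembles of density operators on finite-dimensional Hilbert spaces H₁, H₂, and let {M¹_x}, {M²_y} be POVMs satisfying the Holevo–Yuen–Kennedy–Lax optimality conditions ∑_x η¹_x ρ¹_x M¹_x ⪰ η¹_{x'} ρ¹_{x'} for all x' and ∑_y η²_y ρ²_y M²_y ⪰ η²_{y'} ρ²_{y'} for all y'. Then the product POVM {M¹_x ⊗ M²_y} satisfies the Holevo–Yuen–Kennedy–Lax optimality condition for the product ensemble {(η¹_x η²_y, ρ¹_x ⊗ ρ²_y)}: ∑_{x,y} η¹_x η²_y (ρ¹_x ⊗ ρ²_y)(M¹_x ⊗ M²_y) ⪰ η¹_{x'} η²_{y'} ρ¹_{x'} ⊗ ρ²_{y'} for all (x', y'). -/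

import Mathlib

open Matrix Kronecker ComplexOrder

lemma kron_conjTranspose {m n p q : Type*} (A : Matrix m n ℂ) (B : Matrix p q ℂ) :
    (A ⊗ₖ B)ᴴ = Aᴴ ⊗ₖ Bᴴ := by
  ext ⟨i, j⟩ ⟨k, l⟩
  simp [conjTranspose_apply, kroneckerMap_apply]

lemma psd_kron {m p : Type*} [Fintype m] [Fintype p] [DecidableEq m] [DecidableEq p]
    {A : Matrix m m ℂ} {B : Matrix p p ℂ} (hA : A.PosSemidef) (hB : B.PosSemidef) :
    (A ⊗ₖ B).PosSemidef := by
  exact hA.kronecker hB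

lemma psd_rsmul {n : Type*} [Fintype n] {A : Matrix n n ℂ} (hA : A.PosSemidef)
    {r : ℝ} (hr : 0 ≤ r) : (r • A).PosSemidef := by
  constructor
  · rw [Matrix.IsHermitian, conjTranspose_smul, star_trivial, hA.1]
  · exact (hA.smul hr).2

theorem hykl_condition_tensor {d₁ d₂ ℓ₁ ℓ₂ : ℕ}
    (η₁ : Fin ℓ₁ → ℝ) (η₂ : Fin ℓ₂ → ℝ)
    (ρ₁ : Fin ℓ₁ → Matrix (Fin d₁) (Fin d₁) ℂ)
    (ρ₂ : Fin ℓ₂ → Matrix (Fin d₂) (Fin d₂) ℂ)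
    (M₁ : Fin ℓ₁ → Matrix (Fin d₁) (Fin d₁) ℂ)
    (M₂ : Fin ℓ₂ → Matrix (Fin d₂) (Fin d₂) ℂ)
    (hη₁ : ∀ x, 0 ≤ η₁ x) (hη₁s : ∑ x, η₁ x = 1)
    (hη₂ : ∀ y, 0 ≤ η₂ y) (hη₂s : ∑ y, η₂ y = 1)
    (hρ₁ : ∀ x, (ρ₁ x).PosSemidef) (hρ₁t : ∀ x, (ρ₁ x).trace = 1)
    (hρ₂ : ∀ y, (ρ₂ y).PosSemidef) (hρ₂t : ∀ y, (ρ₂ y).trace = 1)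
    (hM₁ : ∀ x, (M₁ x).PosSemidef) (hM₁s : ∑ x, M₁ x = 1)
    (hM₂ : ∀ y, (M₂ y).PosSemidef) (hM₂s : ∑ y, M₂ y = 1)
    (hopt₁ : ∀ x', ((∑ x, η₁ x • (ρ₁ x * M₁ x)) - η₁ x' • ρ₁ x').PosSemidef)
    (hopt₂ : ∀ y', ((∑ y, η₂ y • (ρ₂ y * M₂ y)) - η₂ y' • ρ₂ y').PosSemidef) :
    ∀ x' y',
      ((∑ x, ∑ y, (η₁ x * η₂ y) • ((ρ₁ x ⊗ₖ ρ₂ y) * (M₁ x ⊗ₖ M₂ y)))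
          - (η₁ x' * η₂ y') • (ρ₁ x' ⊗ₖ ρ₂ y')).PosSemidef := by
  intro x' y'
  set S₁ := ∑ x, η₁ x • (ρ₁ x * M₁ x) with hS₁
  set S₂ := ∑ y, η₂ y • (ρ₂ y * M₂ y) with hS₂
  have key : (∑ x, ∑ y, (η₁ x * η₂ y) • ((ρ₁ x ⊗ₖ ρ₂ y) * (M₁ x ⊗ₖ M₂ y))) = S₁ ⊗ₖ S₂ := by
    rw [hS₁, hS₂]
    ext ⟨i, j⟩ ⟨k, l⟩
    simp only [Matrix.sum_apply, Matrix.smul_apply, kroneckerMap_apply,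
      ← Matrix.mul_kronecker_mul, Finset.sum_mul_sum, Complex.real_smul]
    refine Finset.sum_congr rfl fun x _ => Finset.sum_congr rfl fun y _ => ?_
    push_cast
    ring
  rw [key]
  have hb : (η₂ y' • ρ₂ y').PosSemidef := psd_rsmul (hρ₂ y') (hη₂ y')
  have hS₂psd : S₂.PosSemidef := by
    have h := (hopt₂ y').add hb
    simpa using h
  have h1 : ((S₁ - η₁ x' • ρ₁ x') ⊗ₖ S₂).PosSemidef := psd_kron (hopt₁ x') hS₂psd
  have h2 : ((η₁ x' • ρ₁ x') ⊗ₖ (S₂ - η₂ y' • ρ₂ y')).PosSemidef :=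
    psd_kron (psd_rsmul (hρ₁ x') (hη₁ x')) (hopt₂ y')
  have hsum := h1.add h2
  have heq : (S₁ - η₁ x' • ρ₁ x') ⊗ₖ S₂ + (η₁ x' • ρ₁ x') ⊗ₖ (S₂ - η₂ y' • ρ₂ y')
      = S₁ ⊗ₖ S₂ - (η₁ x' * η₂ y') • (ρ₁ x' ⊗ₖ ρ₂ y') := by
    ext ⟨i, j⟩ ⟨k, l⟩
    simp only [Matrix.add_apply, Matrix.sub_apply, Matrix.smul_apply, kroneckerMap_apply,
      Complex.real_smul]
    push_cast
    ring
  rwa [heq] at hsum
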